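/- If f and Ψ are twice differentiable convex functions on a convex set with nonempty interior, then f is L-smooth relative to Ψ and μ-strongly convex relative to Ψ if and only if μ∇²Ψ(x) ⪯ ∇²f(x) ⪯ L∇²Ψ(x) for all x in the interior. -/

import Mathlib

open RealInnerProductSpace

section Aux

variable {n : ℕ}

private lemma inner_gradient_eq (h : EuclideanSpace ℝ (Fin n) → ℝ)
    (x v : EuclideanSpace ℝ (Fin n)) :
    ⟪gradient h x, v⟫ = fderiv ℝ h x v :=
  InnerProductSpace.toDual_symm_apply

private lemma line_hasDerivAt1 {g : EuclideanSpace ℝ (Fin n) → ℝ} (hg : ContDiff ℝ 2 g)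
    (x v : EuclideanSpace ℝ (Fin n)) (t : ℝ) :
    HasDerivAt (fun t : ℝ => g (x + t • v)) (fderiv ℝ g (x + t • v) v) t := by
  have hc : HasDerivAt (fun t : ℝ => x + t • v) v t := by
    simpa using ((hasDerivAt_id t).smul_const v).const_add x
  have hgd : HasFDerivAt g (fderiv ℝ g (x + t • v)) (x + t • v) :=
    ((hg.differentiable (by norm_num)) _).hasFDerivAt
  exact hgd.comp_hasDerivAt t hc

private lemma line_hasDerivAt2 {g : EuclideanSpace ℝ (Fin n) → ℝ} (hg : ContDiff ℝ 2 g)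
    (x v : EuclideanSpace ℝ (Fin n)) (t : ℝ) :
    HasDerivAt (fun t : ℝ => fderiv ℝ g (x + t • v) v)
      (iteratedFDeriv ℝ 2 g (x + t • v) ![v, v]) t := by
  have hc : HasDerivAt (fun t : ℝ => x + t • v) v t := by
    simpa using ((hasDerivAt_id t).smul_const v).const_add x
  have hF : ContDiff ℝ 1 (fderiv ℝ g) := hg.fderiv_right (by norm_num)
  have hFd : HasFDerivAt (fderiv ℝ g) (fderiv ℝ (fderiv ℝ g) (x + t • v)) (x + t • v) :=
    ((hF.differentiable one_ne_zero) _).hasFDerivAt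
  have h1 : HasDerivAt (fun t : ℝ => fderiv ℝ g (x + t • v))
      (fderiv ℝ (fderiv ℝ g) (x + t • v) v) t := by
    exact hFd.comp_hasDerivAt t hc
  have h2 := h1.clm_apply (hasDerivAt_const t v)
  rw [iteratedFDeriv_two_apply]
  simpa using h2

private lemma core {s : Set (EuclideanSpace ℝ (Fin n))} (hs : Convex ℝ s)
    {g : EuclideanSpace ℝ (Fin n) → ℝ} (hg : ContDiff ℝ 2 g) :
    (∀ x ∈ interior s, ∀ y ∈ interior s, g x + fderiv ℝ g x (y - x) ≤ g y) ↔
    (∀ x ∈ interior s, ∀ v : EuclideanSpace ℝ (Fin n),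
      0 ≤ iteratedFDeriv ℝ 2 g x ![v, v]) := by
  constructor
  · intro H x hx v
    obtain ⟨r, hr, hball⟩ := Metric.isOpen_iff.1 isOpen_interior x hx
    set ε := r / (‖v‖ + 1) with hε
    have hv1 : (0:ℝ) < ‖v‖ + 1 := by positivity
    have hεpos : 0 < ε := div_pos hr hv1
    have hmem : ∀ t : ℝ, |t| < ε → x + t • v ∈ interior s := by
      intro t ht
      apply hball
      rw [Metric.mem_ball, dist_eq_norm]
      have h0 : x + t • v - x = t • v := by abel
      rw [h0, norm_smul, Real.norm_eq_abs]
      have h1 : |t| * ‖v‖ ≤ |t| * (‖v‖ + 1) :=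
        mul_le_mul_of_nonneg_left (by linarith) (abs_nonneg t)
      have h2 : |t| * (‖v‖ + 1) < ε * (‖v‖ + 1) :=
        mul_lt_mul_of_pos_right ht hv1
      have h3 : ε * (‖v‖ + 1) = r := div_mul_cancel₀ r (ne_of_gt hv1)
      linarith
    set φ' := fun t : ℝ => fderiv ℝ g (x + t • v) v with hφ'
    have hmono : ∀ t ∈ Set.Ioo (0:ℝ) ε, φ' 0 ≤ φ' t := by
      intro t ht
      have hyi : x + t • v ∈ interior s := by
        apply hmem
        rw [abs_of_pos ht.1]; exact ht.2
      have hxi : x + (0:ℝ) • v ∈ interior s := by simpa using hx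
      have hA := H x hx (x + t • v) hyi
      have hB := H (x + t • v) hyi x hx
      have e1 : x + t • v - x = t • v := by abel
      have e2 : x - (x + t • v) = -(t • v) := by abel
      rw [e1] at hA
      rw [e2] at hB
      rw [map_smul] at hA
      rw [map_neg, map_smul] at hB
      have hsum : t • fderiv ℝ g x v ≤ t • fderiv ℝ g (x + t • v) v := by
        simp only [smul_eq_mul] at hA hB ⊢
        linarith
      have : fderiv ℝ g x v ≤ fderiv ℝ g (x + t • v) v :=
        le_of_smul_le_smul_left hsum ht.1
      simpa [hφ'] using this
    have hd : HasDerivAt φ' (iteratedFDeriv ℝ 2 g x ![v, v]) 0 := by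
      have := line_hasDerivAt2 hg x v 0
      simpa using this
    have htend : Filter.Tendsto (slope φ' 0) (nhdsWithin 0 (Set.Ioi 0))
        (nhds (iteratedFDeriv ℝ 2 g x ![v, v])) :=
      (hasDerivAt_iff_tendsto_slope.1 hd).mono_left
        (nhdsWithin_mono 0 (fun t ht => ne_of_gt ht))
    refine ge_of_tendsto htend ?_
    filter_upwards [Ioo_mem_nhdsGT_of_mem ⟨le_refl (0:ℝ), hεpos⟩] with t ht
    have h0 : slope φ' 0 t = (φ' t - φ' 0) / t := by
      rw [slope_def_field, sub_zero]
    rw [h0]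
    exact div_nonneg (sub_nonneg.2 (hmono t ht)) (le_of_lt ht.1)
  · intro H x hx y hy
    set v := y - x with hv
    set φ := fun t : ℝ => g (x + t • v) with hφ
    set φ' := fun t : ℝ => fderiv ℝ g (x + t • v) v with hφ'
    have hmem : ∀ t ∈ Set.Icc (0:ℝ) 1, x + t • v ∈ interior s := fun t ht =>
      hs.interior.add_smul_sub_mem hx hy ht
    have hd1 : ∀ t : ℝ, HasDerivAt φ (φ' t) t := fun t => line_hasDerivAt1 hg x v t
    have hd2 : ∀ t : ℝ, HasDerivAt φ' (iteratedFDeriv ℝ 2 g (x + t • v) ![v, v]) t :=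
      fun t => line_hasDerivAt2 hg x v t
    obtain ⟨c, hc, hslope⟩ := exists_hasDerivAt_eq_slope φ φ' one_pos
      (fun t _ => (hd1 t).continuousAt.continuousWithinAt) (fun t _ => hd1 t)
    have hmono : MonotoneOn φ' (Set.Icc (0:ℝ) 1) := by
      apply monotoneOn_of_deriv_nonneg (convex_Icc 0 1)
        (fun t _ => (hd2 t).continuousAt.continuousWithinAt)
        (fun t _ => ((hd2 t).differentiableAt).differentiableWithinAt)
      intro t ht
      rw [interior_Icc] at ht
      rw [(hd2 t).deriv]
      exact H _ (hmem t ⟨le_of_lt ht.1, le_of_lt ht.2⟩) v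
    have h01 : φ' 0 ≤ φ' c :=
      hmono ⟨le_refl 0, zero_le_one⟩ ⟨le_of_lt hc.1, le_of_lt hc.2⟩ (le_of_lt hc.1)
    have hφ1 : φ 1 = g y := by simp [hφ, hv]
    have hφ0 : φ 0 = g x := by simp [hφ]
    have hφ'0 : φ' 0 = fderiv ℝ g x (y - x) := by simp [hφ', hv]
    rw [hφ1, hφ0] at hslope
    rw [← hφ'0]
    have : φ' c = g y - g x := by rw [hslope]; ring
    linarith [h01, this.symm.le, this.le]

private lemma comb_fderiv (a b : ℝ) {u w : EuclideanSpace ℝ (Fin n) → ℝ}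
    (hu : ContDiff ℝ 2 u) (hw : ContDiff ℝ 2 w) (x vec : EuclideanSpace ℝ (Fin n)) :
    fderiv ℝ (fun z => a * u z + b * w z) x vec
      = a * fderiv ℝ u x vec + b * fderiv ℝ w x vec := by
  have hu' : DifferentiableAt ℝ u x := (hu.differentiable (by norm_num)) x
  have hw' : DifferentiableAt ℝ w x := (hw.differentiable (by norm_num)) x
  have h : HasFDerivAt (fun z => a * u z + b * w z)
      (a • fderiv ℝ u x + b • fderiv ℝ w x) x := by
    exact (hu'.hasFDerivAt.const_smul a).add (hw'.hasFDerivAt.const_smul b)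
  rw [h.fderiv]
  simp

private lemma comb_it2 (a b : ℝ) {u w : EuclideanSpace ℝ (Fin n) → ℝ}
    (hu : ContDiff ℝ 2 u) (hw : ContDiff ℝ 2 w) (x v : EuclideanSpace ℝ (Fin n)) :
    iteratedFDeriv ℝ 2 (fun z => a * u z + b * w z) x ![v, v]
      = a * iteratedFDeriv ℝ 2 u x ![v, v] + b * iteratedFDeriv ℝ 2 w x ![v, v] := by
  have h1 : iteratedFDeriv ℝ 2 (fun z => a * u z + b * w z) x
      = iteratedFDeriv ℝ 2 (fun z => a * u z) x + iteratedFDeriv ℝ 2 (fun z => b * w z) x :=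
    iteratedFDeriv_add_apply' (hu.const_smul a).contDiffAt (hw.const_smul b).contDiffAt
  have e2 : (fun z => a * u z) = fun z => a • u z := by funext z; rw [smul_eq_mul]
  have e3 : (fun z => b * w z) = fun z => b • w z := by funext z; rw [smul_eq_mul]
  have h2 : iteratedFDeriv ℝ 2 (fun z => a • u z) x = a • iteratedFDeriv ℝ 2 u x :=
    iteratedFDeriv_const_smul_apply' hu.contDiffAt
  have h3 : iteratedFDeriv ℝ 2 (fun z => b • w z) x = b • iteratedFDeriv ℝ 2 w x :=
    iteratedFDeriv_const_smul_apply' hw.contDiffAt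
  rw [e2, e3] at h1
  rw [h1, h2, h3]
  simp

end Aux

theorem relative_smoothness_hessian_characterization {n : ℕ}
    (s : Set (EuclideanSpace ℝ (Fin n))) (hs : Convex ℝ s) (hsint : (interior s).Nonempty)
    (f Ψ : EuclideanSpace ℝ (Fin n) → ℝ)
    (hf : ContDiff ℝ 2 f) (hΨ : ContDiff ℝ 2 Ψ)
    (hfconv : ConvexOn ℝ s f) (hΨconv : ConvexOn ℝ s Ψ)
    (L μ : ℝ) :
    ((∀ x ∈ interior s, ∀ y ∈ interior s,
        f y ≤ f x + ⟪gradient f x, y - x⟫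
          + L * (Ψ y - Ψ x - ⟪gradient Ψ x, y - x⟫)) ∧
     (∀ x ∈ interior s, ∀ y ∈ interior s,
        f y ≥ f x + ⟪gradient f x, y - x⟫
          + μ * (Ψ y - Ψ x - ⟪gradient Ψ x, y - x⟫)))
    ↔ (∀ x ∈ interior s, ∀ v : EuclideanSpace ℝ (Fin n),
        μ * iteratedFDeriv ℝ 2 Ψ x ![v, v] ≤ iteratedFDeriv ℝ 2 f x ![v, v]
          ∧ iteratedFDeriv ℝ 2 f x ![v, v] ≤ L * iteratedFDeriv ℝ 2 Ψ x ![v, v]) := by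
  set g₁ : EuclideanSpace ℝ (Fin n) → ℝ := fun z => L * Ψ z + (-1) * f z with hg₁
  set g₂ : EuclideanSpace ℝ (Fin n) → ℝ := fun z => (-μ) * Ψ z + 1 * f z with hg₂
  have hg₁c : ContDiff ℝ 2 g₁ := (contDiff_const.mul hΨ).add (contDiff_const.mul hf)
  have hg₂c : ContDiff ℝ 2 g₂ := (contDiff_const.mul hΨ).add (contDiff_const.mul hf)
  have c1 := core hs hg₁c
  have c2 := core hs hg₂c
  constructor
  · rintro ⟨hL, hμ⟩ x hx v
    have e1 := comb_it2 L (-1) hΨ hf x v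
    have e2 := comb_it2 (-μ) 1 hΨ hf x v
    have h1 : 0 ≤ iteratedFDeriv ℝ 2 g₁ x ![v, v] := by
      apply (c1.1 ?_) x hx v
      intro a ha b hb
      have := hL a ha b hb
      rw [inner_gradient_eq, inner_gradient_eq] at this
      have ef := comb_fderiv L (-1) hΨ hf a (b - a)
      rw [hg₁]
      dsimp only
      rw [ef]
      linarith
    have h2 : 0 ≤ iteratedFDeriv ℝ 2 g₂ x ![v, v] := by
      apply (c2.1 ?_) x hx v
      intro a ha b hb
      have := hμ a ha b hb
      rw [inner_gradient_eq, inner_gradient_eq] at this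
      have ef := comb_fderiv (-μ) 1 hΨ hf a (b - a)
      rw [hg₂]
      dsimp only
      rw [ef]
      linarith
    rw [hg₁] at h1
    rw [hg₂] at h2
    rw [e1] at h1
    rw [e2] at h2
    constructor <;> linarith
  · intro H
    constructor
    · intro x hx y hy
      have h1 : g₁ x + fderiv ℝ g₁ x (y - x) ≤ g₁ y := by
        apply (c1.2 ?_) x hx y hy
        intro a ha v
        rw [hg₁, comb_it2 L (-1) hΨ hf a v]
        have := (H a ha v).2
        linarith
      rw [inner_gradient_eq, inner_gradient_eq]
      have ef := comb_fderiv L (-1) hΨ hf x (y - x)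
      rw [hg₁] at h1
      dsimp only at h1
      rw [ef] at h1
      linarith
    · intro x hx y hy
      have h2 : g₂ x + fderiv ℝ g₂ x (y - x) ≤ g₂ y := by
        apply (c2.2 ?_) x hx y hy
        intro a ha v
        rw [hg₂, comb_it2 (-μ) 1 hΨ hf a v]
        have := (H a ha v).1
        linarith
      rw [ge_iff_le, inner_gradient_eq, inner_gradient_eq]
      have ef := comb_fderiv (-μ) 1 hΨ hf x (y - x)
      rw [hg₂] at h2
      dsimp only at h2
      rw [ef] at h2
      linarith
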